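/- arXiv:0802.3401 — 3 statements merged into one kernel-verified Lean document; each statement's English description precedes it below -/
import Mathlib

section
/- For every positive integer M, ∑_{i=1}^{M} C(M,i) · i! · (i+1)/2 = (M/2) · ⌊e·M!⌋. -/
open Finset

-- b j = M!/j!
private lemma cast_div_fact {M j : ℕ} (h : j ≤ M) :
    ((M.factorial / j.factorial : ℕ) : ℝ) = (M.factorial : ℝ) / (j.factorial : ℝ) :=
  Nat.cast_div (Nat.factorial_dvd_factorial h) (by exact_mod_cast j.factorial_pos.ne')

private lemma floor_e_fact (M : ℕ) (hM : 0 < M) :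
    ((⌊Real.exp 1 * (M.factorial : ℝ)⌋ : ℤ) : ℝ) =
      ∑ j ∈ range (M + 1), (M.factorial : ℝ) / (j.factorial : ℝ) := by
  set S : ℕ := ∑ j ∈ range (M + 1), M.factorial / j.factorial with hS
  have hcast : (S : ℝ) = ∑ j ∈ range (M + 1), (M.factorial : ℝ) / (j.factorial : ℝ) := by
    rw [hS, Nat.cast_sum]
    refine Finset.sum_congr rfl fun j hj => ?_
    exact cast_div_fact (Nat.lt_succ_iff.mp (Finset.mem_range.mp hj))
  have hMfpos : (0 : ℝ) < (M.factorial : ℝ) := by exact_mod_cast M.factorial_pos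
  have hsum1 : ∑ i ∈ range (M + 1), (1 : ℝ) ^ i / i.factorial ≤ Real.exp 1 :=
    Real.sum_le_exp_of_nonneg zero_le_one _
  have hlow : (S : ℝ) ≤ Real.exp 1 * (M.factorial : ℝ) := by
    rw [hcast]
    have := mul_le_mul_of_nonneg_right hsum1 hMfpos.le
    rw [Finset.sum_mul] at this
    calc ∑ j ∈ range (M + 1), (M.factorial : ℝ) / (j.factorial : ℝ)
        = ∑ j ∈ range (M + 1), (1 : ℝ) ^ j / j.factorial * M.factorial := by
          refine Finset.sum_congr rfl fun j _ => ?_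
          rw [one_pow]; ring
      _ ≤ Real.exp 1 * M.factorial := this
  have hupp : Real.exp 1 * (M.factorial : ℝ) < (S : ℝ) + 1 := by
    have hb := Real.exp_bound' zero_le_one le_rfl (Nat.succ_pos M)
    have h1 : Real.exp 1 ≤ (∑ m ∈ range (M + 1), (1:ℝ) ^ m / m.factorial) +
        ((M + 1 : ℕ) + 1) / ((M + 1).factorial * (M + 1 : ℕ)) := by
      simpa using hb
    have h2 := mul_le_mul_of_nonneg_right h1 hMfpos.le
    rw [add_mul, Finset.sum_mul] at h2
    have h3 : ∑ m ∈ range (M + 1), (1:ℝ) ^ m / m.factorial * M.factorial = (S : ℝ) := by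
      rw [hcast]
      refine Finset.sum_congr rfl fun j _ => ?_
      rw [one_pow]; ring
    rw [h3] at h2
    have hrem : ((M + 1 : ℕ) + 1) / (((M + 1).factorial : ℝ) * (M + 1 : ℕ)) * M.factorial < 1 := by
      have hf : ((M + 1).factorial : ℝ) = (M + 1) * M.factorial := by
        rw [Nat.factorial_succ]; push_cast; ring
      rw [hf]
      rw [div_mul_eq_mul_div, div_lt_one (by positivity)]
      push_cast
      nlinarith [hMfpos, (show (1:ℝ) ≤ M by exact_mod_cast hM)]
    linarith
  have : ⌊Real.exp 1 * (M.factorial : ℝ)⌋ = (S : ℤ) := by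
    rw [Int.floor_eq_iff]
    constructor
    · exact_mod_cast hlow
    · push_cast; exact_mod_cast hupp
  rw [this]; push_cast [hcast]; rfl

private lemma alg (N : ℕ) :
    ∑ i ∈ Finset.Icc 1 (N + 1), ((N + 1).choose i : ℝ) * i.factorial * (i + 1) / 2 =
      ((N : ℝ) + 1) / 2 * ∑ j ∈ range (N + 2), ((N + 1).factorial : ℝ) / (j.factorial : ℝ) := by
  -- Step 1: reindex i ↦ (N+1) - i
  have step1 : ∑ i ∈ Finset.Icc 1 (N + 1), ((N + 1).choose i : ℝ) * i.factorial * (i + 1) / 2 =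
      ∑ j ∈ range (N + 1), ((N + 1).factorial : ℝ) / (j.factorial : ℝ) * (((N : ℝ) + 1) + 1 - j) / 2 := by
    refine Finset.sum_nbij' (fun i => N + 1 - i) (fun j => N + 1 - j) ?_ ?_ ?_ ?_ ?_
    · intro i hi
      simp only [Finset.mem_Icc] at hi
      simp only [Finset.mem_range]
      omega
    · intro j hj
      simp only [Finset.mem_range] at hj
      simp only [Finset.mem_Icc]
      omega
    · intro i hi; simp only [Finset.mem_Icc] at hi; omega
    · intro j hj; simp only [Finset.mem_range] at hj; omega
    · intro i hi
      simp only [Finset.mem_Icc] at hi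
      have key : (((N + 1).choose i : ℕ) : ℝ) * i.factorial =
          ((N + 1).factorial : ℝ) / (((N + 1 - i).factorial : ℕ) : ℝ) := by
        have h := Nat.choose_mul_factorial_mul_factorial hi.2
        have hcast : (((N + 1).choose i : ℕ) : ℝ) * i.factorial * ((N + 1 - i).factorial : ℝ)
            = ((N + 1).factorial : ℝ) := by exact_mod_cast h
        have hne : (((N + 1 - i).factorial : ℕ) : ℝ) ≠ 0 := by
          exact_mod_cast (N + 1 - i).factorial_pos.ne'
        field_simp
        linarith [hcast]
      rw [key]
      have hrw : (((N : ℝ) + 1) + 1 - ((N + 1 - i : ℕ) : ℝ)) = (i : ℝ) + 1 := by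
        have : ((N + 1 - i : ℕ) : ℝ) = ((N : ℝ) + 1) - i := by
          have := Nat.cast_sub (R := ℝ) hi.2
          push_cast at this ⊢
          linarith [this]
        rw [this]; ring
      rw [hrw]
  rw [step1]
  -- Step 2: telescoping
  have shift : ∑ j ∈ range (N + 1), (j : ℝ) * (((N + 1).factorial : ℝ) / (j.factorial : ℝ)) =
      ∑ k ∈ range N, ((N + 1).factorial : ℝ) / (k.factorial : ℝ) := by
    rw [Finset.sum_range_succ']
    simp only [Nat.cast_zero, zero_mul, add_zero]
    refine Finset.sum_congr rfl fun k hk => ?_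
    have hfk : ((k + 1).factorial : ℝ) = ((k : ℝ) + 1) * k.factorial := by
      rw [Nat.factorial_succ]; push_cast; ring
    rw [hfk]
    have h1 : (k.factorial : ℝ) ≠ 0 := by exact_mod_cast k.factorial_pos.ne'
    have h2 : ((k : ℝ) + 1) ≠ 0 := by positivity
    field_simp
    push_cast
    ring
  have hbN : ((N + 1).factorial : ℝ) / (N.factorial : ℝ) = (N : ℝ) + 1 := by
    have h0 : ((N + 1).factorial : ℝ) = ((N : ℝ) + 1) * N.factorial := by
      rw [Nat.factorial_succ]; push_cast; ring
    have h1 : (N.factorial : ℝ) ≠ 0 := by exact_mod_cast N.factorial_pos.ne'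
    rw [h0]; field_simp
  have hbM : ((N + 1).factorial : ℝ) / ((N + 1).factorial : ℝ) = 1 := by
    have : ((N + 1).factorial : ℝ) ≠ 0 := by exact_mod_cast (N + 1).factorial_pos.ne'
    field_simp
  have expand : ∑ j ∈ range (N + 1), ((N + 1).factorial : ℝ) / (j.factorial : ℝ) * (((N : ℝ) + 1) + 1 - j) / 2 =
      ((((N : ℝ) + 1) + 1) * ∑ j ∈ range (N + 1), ((N + 1).factorial : ℝ) / (j.factorial : ℝ)
        - ∑ j ∈ range (N + 1), (j : ℝ) * (((N + 1).factorial : ℝ) / (j.factorial : ℝ))) / 2 := by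
    rw [Finset.mul_sum, ← Finset.sum_sub_distrib, ← Finset.sum_div]
    refine congrArg (· / 2) (Finset.sum_congr rfl fun j _ => ?_)
    ring
  have e1 : ∑ j ∈ range (N + 2), ((N + 1).factorial : ℝ) / (j.factorial : ℝ) =
      ∑ j ∈ range (N + 1), ((N + 1).factorial : ℝ) / (j.factorial : ℝ) + 1 := by
    rw [Finset.sum_range_succ, hbM]
  have e2 : ∑ j ∈ range (N + 1), ((N + 1).factorial : ℝ) / (j.factorial : ℝ) =
      ∑ j ∈ range N, ((N + 1).factorial : ℝ) / (j.factorial : ℝ) + ((N : ℝ) + 1) := by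
    rw [Finset.sum_range_succ, hbN]
  rw [expand, shift, e1, e2]
  ring

/-- For every positive integer `M`,
`∑_{i=1}^{M} C(M,i)·i!·(i+1)/2 = (M/2)·⌊e·M!⌋`. -/
theorem stmt5 (M : ℕ) (hM : 0 < M) :
    ∑ i ∈ Finset.Icc 1 M, (M.choose i : ℝ) * i.factorial * (i + 1) / 2 =
      (M : ℝ) / 2 * ((⌊Real.exp 1 * (M.factorial : ℝ)⌋ : ℤ) : ℝ) := by
  obtain ⟨N, rfl⟩ : ∃ N, M = N + 1 := ⟨M - 1, (Nat.succ_pred_eq_of_pos hM).symm⟩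
  rw [floor_e_fact _ hM]
  have := alg N
  push_cast at this ⊢
  rw [this]
end

section
/- Let X_1,...,X_M, Y be finite random variables with X_1,...,X_M mutually independent, and suppose I(X_S; Y) > 0 for every nonempty S ⊆ [M]. Then for every subset A ⊆ [M] disjoint from a nonempty set S and every T with S ⊊ T ⊆ [M] and A ∩ T = ∅, I(X_S; Y | X_A) < I(X_T; Y | X_A). -/
open Finset

/-- Marginal joint pmf of `(X_S, Y)` obtained from the joint pmf `p` of
`(X_1,…,X_M, Y)` by summing out inputs outside `S`; evaluated at the
values that `x` takes on `S` and at `y`. -/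
noncomputable def margXY {M : ℕ} {α : Fin M → Type*} [∀ i, Fintype (α i)]
    [∀ i, DecidableEq (α i)] {β : Type*} [Fintype β]
    (p : (∀ i, α i) → β → ℝ) (S : Finset (Fin M)) (x : ∀ i, α i) (y : β) : ℝ :=
  ∑ x' : ∀ i, α i, if ∀ i ∈ S, x' i = x i then p x' y else 0

/-- Marginal pmf of `X_S`. -/
noncomputable def margX {M : ℕ} {α : Fin M → Type*} [∀ i, Fintype (α i)]
    [∀ i, DecidableEq (α i)] {β : Type*} [Fintype β]
    (p : (∀ i, α i) → β → ℝ) (S : Finset (Fin M)) (x : ∀ i, α i) : ℝ :=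
  ∑ y : β, margXY p S x y

/-- Conditional mutual information `I(X_S; Y | X_A)`, via the standard
sum formula. -/
noncomputable def condMI {M : ℕ} {α : Fin M → Type*} [∀ i, Fintype (α i)]
    [∀ i, DecidableEq (α i)] {β : Type*} [Fintype β]
    (p : (∀ i, α i) → β → ℝ) (S A : Finset (Fin M)) : ℝ :=
  ∑ x : ∀ i, α i, ∑ y : β,
    p x y * Real.log ((margXY p (S ∪ A) x y * margX p A x) /
      (margX p (S ∪ A) x * margXY p A x y))

set_option linter.unusedSectionVars false

section aux
variable {M : ℕ} {α : Fin M → Type*} [∀ i, Fintype (α i)]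
    [∀ i, DecidableEq (α i)] {β : Type*} [Fintype β]
    (p : (∀ i, α i) → β → ℝ)

lemma margXY_nonneg (h0 : ∀ x y, 0 ≤ p x y) (U : Finset (Fin M)) (x : ∀ i, α i) (y : β) :
    0 ≤ margXY p U x y :=
  Finset.sum_nonneg fun x' _ => by split <;> simp [h0]

lemma margX_nonneg (h0 : ∀ x y, 0 ≤ p x y) (U : Finset (Fin M)) (x : ∀ i, α i) :
    0 ≤ margX p U x :=
  Finset.sum_nonneg fun y _ => margXY_nonneg p h0 U x y

lemma le_margXY (h0 : ∀ x y, 0 ≤ p x y) (U : Finset (Fin M)) (x : ∀ i, α i) (y : β) :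
    p x y ≤ margXY p U x y := by
  have := Finset.single_le_sum (f := fun x' => if ∀ i ∈ U, x' i = x i then p x' y else 0)
    (fun x' _ => by split <;> simp [h0]) (Finset.mem_univ x)
  simpa [margXY] using this

lemma margXY_le_margX (h0 : ∀ x y, 0 ≤ p x y) (U : Finset (Fin M)) (x : ∀ i, α i) (y : β) :
    margXY p U x y ≤ margX p U x :=
  Finset.single_le_sum (fun y' _ => margXY_nonneg p h0 U x y') (Finset.mem_univ y)

lemma margXY_congr {U : Finset (Fin M)} {x z : ∀ i, α i} (h : ∀ i ∈ U, x i = z i) (y : β) :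
    margXY p U x y = margXY p U z y := by
  unfold margXY
  refine Finset.sum_congr rfl fun x' _ => ?_
  refine if_congr ⟨fun hc i hi => (hc i hi).trans (h i hi), fun hc i hi => (hc i hi).trans (h i hi).symm⟩ rfl rfl

lemma margX_congr {U : Finset (Fin M)} {x z : ∀ i, α i} (h : ∀ i ∈ U, x i = z i) :
    margX p U x = margX p U z :=
  Finset.sum_congr rfl fun y _ => margXY_congr p h y

lemma margXY_empty (x : ∀ i, α i) (y : β) : margXY p ∅ x y = ∑ x' : ∀ i, α i, p x' y := by
  unfold margXY; simp

lemma margX_empty (hp : ∑ x : ∀ i, α i, ∑ y : β, p x y = 1) (x : ∀ i, α i) :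
    margX p ∅ x = 1 := by
  unfold margX
  rw [Finset.sum_comm] at hp
  simpa [margXY_empty] using hp

lemma margXY_univ (x : ∀ i, α i) (y : β) : margXY p Finset.univ x y = p x y := by
  unfold margXY
  have : ∀ x' : ∀ i, α i, (if ∀ i ∈ (Finset.univ : Finset (Fin M)), x' i = x i then p x' y else 0)
      = if x' = x then p x' y else 0 := by
    intro x'
    refine if_congr ?_ rfl rfl
    simp [funext_iff]
  rw [Finset.sum_congr rfl fun x' _ => this x']
  simp

end aux

section aux2
variable {M : ℕ} {α : Fin M → Type*} [∀ i, Fintype (α i)]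
    [∀ i, DecidableEq (α i)] {β : Type*} [Fintype β]
    (p : (∀ i, α i) → β → ℝ)

/-- fill coordinates in `U` from `u`, elsewhere from `x0` -/
noncomputable def emb (U : Finset (Fin M)) (x0 : ∀ i, α i)
    (u : ∀ i : {i : Fin M // i ∈ U}, α i.1) : ∀ i, α i :=
  fun i => if h : i ∈ U then u ⟨i, h⟩ else x0 i

lemma emb_mem {U : Finset (Fin M)} (x0 : ∀ i, α i) (u : ∀ i : {i : Fin M // i ∈ U}, α i.1)
    {i : Fin M} (h : i ∈ U) : emb U x0 u i = u ⟨i, h⟩ := dif_pos h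

/-- uniqueness counting -/
lemma sum_ite_emb (U : Finset (Fin M)) (x0 : ∀ i, α i) (x' : ∀ i, α i) (c : ℝ) :
    ∑ u : ∀ i : {i : Fin M // i ∈ U}, α i.1,
      (if ∀ i ∈ U, x' i = emb U x0 u i then c else 0) = c := by
  have key : ∀ u : ∀ i : {i : Fin M // i ∈ U}, α i.1,
      ((∀ i ∈ U, x' i = emb U x0 u i) ↔ u = fun (j : {i : Fin M // i ∈ U}) => x' j.1) := by
    intro u
    constructor
    · intro h; funext j
      obtain ⟨i, hi⟩ := j
      exact ((h i hi).trans (emb_mem x0 u hi)).symm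
    · rintro rfl i hi; rw [emb_mem x0 _ hi]
  calc ∑ u : ∀ i : {i : Fin M // i ∈ U}, α i.1,
        (if ∀ i ∈ U, x' i = emb U x0 u i then c else 0)
      = ∑ u : ∀ i : {i : Fin M // i ∈ U}, α i.1,
        (if u = fun (j : {i : Fin M // i ∈ U}) => x' j.1 then c else 0) :=
        Finset.sum_congr rfl fun u _ => if_congr (key u) rfl rfl
    _ = c := by rw [Finset.sum_ite_eq' Finset.univ]; simp

/-- grouping: sum of `p * f` with `f` depending only on `U`-coordinates -/
lemma group_sum (U : Finset (Fin M)) (x0 : ∀ i, α i) (y : β) (f : (∀ i, α i) → ℝ)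
    (hf : ∀ x x' : ∀ i, α i, (∀ i ∈ U, x i = x' i) → f x = f x') :
    ∑ x : ∀ i, α i, p x y * f x
      = ∑ u : ∀ i : {i : Fin M // i ∈ U}, α i.1,
          margXY p U (emb U x0 u) y * f (emb U x0 u) := by
  have : ∀ u : ∀ i : {i : Fin M // i ∈ U}, α i.1,
      margXY p U (emb U x0 u) y * f (emb U x0 u)
        = ∑ x' : ∀ i, α i, (if ∀ i ∈ U, x' i = emb U x0 u i then p x' y * f x' else 0) := by
    intro u
    unfold margXY
    rw [Finset.sum_mul]
    refine Finset.sum_congr rfl fun x' _ => ?_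
    split_ifs with h
    · rw [hf x' (emb U x0 u) h]
    · rw [zero_mul]
  rw [Finset.sum_congr rfl fun u _ => this u, Finset.sum_comm]
  refine Finset.sum_congr rfl fun x' _ => ?_
  rw [sum_ite_emb U x0 x' (p x' y * f x')]

lemma group_sum_one (U : Finset (Fin M)) (x0 : ∀ i, α i) (y : β) :
    ∑ u : ∀ i : {i : Fin M // i ∈ U}, α i.1, margXY p U (emb U x0 u) y
      = ∑ x : ∀ i, α i, p x y := by
  have := group_sum p U x0 y (fun _ => (1:ℝ)) (fun _ _ _ => rfl)
  simpa using this.symm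

/-- counting identity for the product of two marginals over disjoint sets -/
lemma count_sum {B C : Finset (Fin M)} (hBC : Disjoint B C) (x0 : ∀ i, α i) (y : β) :
    ∑ u : ∀ i : {i : Fin M // i ∈ B ∪ C}, α i.1,
      margXY p B (emb (B ∪ C) x0 u) y * margXY p C (emb (B ∪ C) x0 u) y
      = (∑ x : ∀ i, α i, p x y) * (∑ x : ∀ i, α i, p x y) := by
  have expand : ∀ u : ∀ i : {i : Fin M // i ∈ B ∪ C}, α i.1,
      margXY p B (emb (B ∪ C) x0 u) y * margXY p C (emb (B ∪ C) x0 u) y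
      = ∑ x1 : ∀ i, α i, ∑ x2 : ∀ i, α i,
          (if (∀ i ∈ B, x1 i = emb (B ∪ C) x0 u i) ∧ (∀ i ∈ C, x2 i = emb (B ∪ C) x0 u i)
            then p x1 y * p x2 y else 0) := by
    intro u
    unfold margXY
    rw [Finset.sum_mul_sum]
    refine Finset.sum_congr rfl fun x1 _ => Finset.sum_congr rfl fun x2 _ => ?_
    rw [ite_zero_mul_ite_zero]
  rw [Finset.sum_congr rfl fun u _ => expand u, Finset.sum_comm]
  rw [Finset.sum_mul_sum]
  refine Finset.sum_congr rfl fun x1 _ => ?_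
  rw [Finset.sum_comm]
  refine Finset.sum_congr rfl fun x2 _ => ?_
  -- unique u
  have key : ∀ u : ∀ i : {i : Fin M // i ∈ B ∪ C}, α i.1,
      (((∀ i ∈ B, x1 i = emb (B ∪ C) x0 u i) ∧ (∀ i ∈ C, x2 i = emb (B ∪ C) x0 u i))
        ↔ u = fun (j : {i : Fin M // i ∈ B ∪ C}) => if h : j.1 ∈ B then x1 j.1 else x2 j.1) := by
    intro u
    constructor
    · rintro ⟨h1, h2⟩; funext j
      obtain ⟨i, hij⟩ := j
      by_cases hb : i ∈ B
      · have := ((h1 i hb).trans (emb_mem x0 u hij)).symm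
        simpa [hb] using this
      · have hc : i ∈ C := by
          rcases Finset.mem_union.mp hij with h | h
          · exact absurd h hb
          · exact h
        have := ((h2 i hc).trans (emb_mem x0 u hij)).symm
        simpa [hb] using this
    · rintro rfl
      constructor
      · intro i hi
        rw [emb_mem x0 _ (Finset.mem_union_left C hi)]
        simp [hi]
      · intro i hi
        rw [emb_mem x0 _ (Finset.mem_union_right B hi)]
        have hb : i ∉ B := fun h => (Finset.disjoint_left.mp hBC h) hi
        simp [hb]
  calc (∑ u : ∀ i : {i : Fin M // i ∈ B ∪ C}, α i.1,
      if (∀ i ∈ B, x1 i = emb (B ∪ C) x0 u i) ∧ (∀ i ∈ C, x2 i = emb (B ∪ C) x0 u i)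
        then p x1 y * p x2 y else 0)
      = ∑ u : ∀ i : {i : Fin M // i ∈ B ∪ C}, α i.1,
        (if u = fun (j : {i : Fin M // i ∈ B ∪ C}) => if h : j.1 ∈ B then x1 j.1 else x2 j.1 then p x1 y * p x2 y else 0) :=
        Finset.sum_congr rfl fun u _ => if_congr (key u) rfl rfl
    _ = p x1 y * p x2 y := by rw [Finset.sum_ite_eq' Finset.univ]; simp

end aux2

section aux3
variable {M : ℕ} {α : Fin M → Type*} [∀ i, Fintype (α i)]
    [∀ i, DecidableEq (α i)] {β : Type*} [Fintype β]
    (p : (∀ i, α i) → β → ℝ)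

/-- fill coordinates outside `U` from `v`, inside `U` from `x` -/
noncomputable def patch (U : Finset (Fin M)) (x : ∀ i, α i)
    (v : ∀ i : {i : Fin M // i ∉ U}, α i.1) : ∀ i, α i :=
  fun i => if h : i ∈ U then x i else v ⟨i, h⟩

lemma split_sum (U : Finset (Fin M)) (x : ∀ i, α i) (g : (∀ i, α i) → ℝ) :
    ∑ x' : ∀ i, α i, (if ∀ i ∈ U, x' i = x i then g x' else 0)
      = ∑ v : ∀ i : {i : Fin M // i ∉ U}, α i.1, g (patch U x v) := by
  have step : ∀ x' : ∀ i, α i,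
      (if ∀ i ∈ U, x' i = x i then g x' else 0)
        = ∑ v : ∀ i : {i : Fin M // i ∉ U}, α i.1,
            (if x' = patch U x v then g x' else 0) := by
    intro x'
    by_cases hc : ∀ i ∈ U, x' i = x i
    · rw [if_pos hc]
      symm
      have key : ∀ v : ∀ i : {i : Fin M // i ∉ U}, α i.1,
          (x' = patch U x v ↔ v = fun (j : {i : Fin M // i ∉ U}) => x' j.1) := by
        intro v
        constructor
        · rintro rfl; funext j
          obtain ⟨i, hij⟩ := j
          simp [patch, hij]
        · rintro rfl; funext i
          by_cases h : i ∈ U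
          · simp [patch, h, hc i h]
          · simp [patch, h]
      calc (∑ v : ∀ i : {i : Fin M // i ∉ U}, α i.1,
            (if x' = patch U x v then g x' else 0))
          = ∑ v : ∀ i : {i : Fin M // i ∉ U}, α i.1,
            (if v = fun (j : {i : Fin M // i ∉ U}) => x' j.1 then g x' else 0) :=
            Finset.sum_congr rfl fun v _ => if_congr (key v) rfl rfl
        _ = g x' := by rw [Finset.sum_ite_eq' Finset.univ]; simp
    · rw [if_neg hc]
      refine (Finset.sum_eq_zero fun v _ => ?_).symm
      rw [if_neg]
      rintro rfl
      exact hc fun i hi => by simp [patch, hi]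
  rw [Finset.sum_congr rfl fun x' _ => step x', Finset.sum_comm]
  refine Finset.sum_congr rfl fun v _ => ?_
  rw [Finset.sum_ite_eq' Finset.univ]; simp

lemma margXY_patch (U : Finset (Fin M)) (x : ∀ i, α i) (y : β) :
    margXY p U x y = ∑ v : ∀ i : {i : Fin M // i ∉ U}, α i.1, p (patch U x v) y :=
  split_sum U x (p · y)

lemma margX_univ_eq (x : ∀ i, α i) : margX p Finset.univ x = ∑ y : β, p x y := by
  unfold margX
  refine Finset.sum_congr rfl fun y _ => ?_
  unfold margXY
  have : ∀ x' : ∀ i, α i, (if ∀ i ∈ (Finset.univ : Finset (Fin M)), x' i = x i then p x' y else 0)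
      = if x' = x then p x' y else 0 := fun x' => if_congr (by simp [funext_iff]) rfl rfl
  rw [Finset.sum_congr rfl fun x' _ => this x', Finset.sum_ite_eq' Finset.univ]; simp

lemma single_sum (hp : ∑ x : ∀ i, α i, ∑ y : β, p x y = 1) (i : Fin M) (x : ∀ i, α i) :
    ∑ a : α i, margX p {i} (Function.update x i a) = 1 := by
  have : ∀ a : α i, margX p {i} (Function.update x i a)
      = ∑ y : β, ∑ x' : ∀ i, α i, (if x' i = a then p x' y else 0) := by
    intro a
    unfold margX margXY
    refine Finset.sum_congr rfl fun y _ => Finset.sum_congr rfl fun x' _ => ?_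
    refine if_congr ?_ rfl rfl
    simp
  rw [Finset.sum_congr rfl fun a _ => this a]
  calc ∑ a : α i, ∑ y : β, ∑ x' : ∀ i, α i, (if x' i = a then p x' y else 0)
      = ∑ y : β, ∑ a : α i, ∑ x' : ∀ i, α i, (if x' i = a then p x' y else 0) :=
        Finset.sum_comm
    _ = ∑ y : β, ∑ x' : ∀ i, α i, ∑ a : α i, (if x' i = a then p x' y else 0) :=
        Finset.sum_congr rfl fun y _ => Finset.sum_comm
    _ = ∑ y : β, ∑ x' : ∀ i, α i, p x' y := by
        refine Finset.sum_congr rfl fun y _ => Finset.sum_congr rfl fun x' _ => ?_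
        rw [Finset.sum_ite_eq Finset.univ]; simp
    _ = 1 := by rw [Finset.sum_comm]; exact hp

lemma margX_prod (hp : ∑ x : ∀ i, α i, ∑ y : β, p x y = 1)
    (hind : ∀ x : ∀ i, α i, margX p Finset.univ x = ∏ i : Fin M, margX p {i} x)
    (U : Finset (Fin M)) (x : ∀ i, α i) :
    margX p U x = ∏ i ∈ U, margX p {i} x := by
  have h1 : margX p U x = ∑ v : ∀ i : {i : Fin M // i ∉ U}, α i.1,
      margX p Finset.univ (patch U x v) :=
    calc margX p U x
        = ∑ y : β, ∑ v : ∀ i : {i : Fin M // i ∉ U}, α i.1, p (patch U x v) y :=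
          Finset.sum_congr rfl fun y _ => margXY_patch p U x y
      _ = ∑ v : ∀ i : {i : Fin M // i ∉ U}, α i.1, ∑ y : β, p (patch U x v) y :=
          Finset.sum_comm
      _ = ∑ v : ∀ i : {i : Fin M // i ∉ U}, α i.1, margX p Finset.univ (patch U x v) :=
          Finset.sum_congr rfl fun v _ => (margX_univ_eq p _).symm
  have h2 : ∀ v : ∀ i : {i : Fin M // i ∉ U}, α i.1,
      margX p Finset.univ (patch U x v) = (∏ i ∈ U, margX p {i} x) *
        ∏ j : {i : Fin M // i ∉ U}, margX p {j.1} (Function.update x j.1 (v j)) := by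
    intro v
    rw [hind, ← Finset.prod_mul_prod_compl U]
    congr 1
    · refine Finset.prod_congr rfl fun i hi => margX_congr p fun j hj => ?_
      rw [Finset.mem_singleton] at hj; subst hj
      simp [patch, hi]
    · rw [Finset.prod_subtype (p := fun i => i ∉ U) Uᶜ (fun i => Finset.mem_compl)]
      refine Finset.prod_congr rfl fun j _ => margX_congr p fun k hk => ?_
      rw [Finset.mem_singleton] at hk; subst hk
      simp [patch, j.2]
  rw [h1, Finset.sum_congr rfl fun v _ => h2 v, ← Finset.mul_sum]
  have h3 : ∑ v : ∀ i : {i : Fin M // i ∉ U}, α i.1,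
      ∏ j : {i : Fin M // i ∉ U}, margX p {j.1} (Function.update x j.1 (v j)) = 1 := by
    rw [← Fintype.prod_sum (fun (j : {i : Fin M // i ∉ U}) (a : α j.1) =>
      margX p {j.1} (Function.update x j.1 a))]
    rw [Finset.prod_congr rfl fun j _ => single_sum p hp j.1 x]
    · exact Finset.prod_const_one
  rw [h3, mul_one]

end aux3

section aux4
variable {M : ℕ} {α : Fin M → Type*} [∀ i, Fintype (α i)]
    [∀ i, DecidableEq (α i)] {β : Type*} [Fintype β]
    (p : (∀ i, α i) → β → ℝ)

lemma margX_union (hp : ∑ x : ∀ i, α i, ∑ y : β, p x y = 1)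
    (hind : ∀ x : ∀ i, α i, margX p Finset.univ x = ∏ i : Fin M, margX p {i} x)
    {B C : Finset (Fin M)} (hBC : Disjoint B C) (x : ∀ i, α i) :
    margX p (B ∪ C) x = margX p B x * margX p C x := by
  rw [margX_prod p hp hind, margX_prod p hp hind, margX_prod p hp hind,
    Finset.prod_union hBC]

lemma condMI_chain (h0 : ∀ x y, 0 ≤ p x y) {S T A : Finset (Fin M)} (hST : S ⊆ T) :
    condMI p T A = condMI p S A + condMI p (T \ S) (S ∪ A) := by
  have hU : T \ S ∪ (S ∪ A) = T ∪ A := by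
    rw [← Finset.union_assoc, Finset.sdiff_union_self_eq_union,
      Finset.union_eq_left.mpr hST]
  unfold condMI
  rw [← Finset.sum_add_distrib]
  refine Finset.sum_congr rfl fun x _ => ?_
  rw [← Finset.sum_add_distrib]
  refine Finset.sum_congr rfl fun y _ => ?_
  rw [hU]
  rcases eq_or_lt_of_le (h0 x y) with hz | hpo
  · rw [← hz]; ring
  have ha1 : 0 < margXY p (S ∪ A) x y := lt_of_lt_of_le hpo (le_margXY p h0 _ x y)
  have ha4 : 0 < margXY p A x y := lt_of_lt_of_le hpo (le_margXY p h0 _ x y)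
  have hb1 : 0 < margXY p (T ∪ A) x y := lt_of_lt_of_le hpo (le_margXY p h0 _ x y)
  have ha3 : 0 < margX p (S ∪ A) x := lt_of_lt_of_le ha1 (margXY_le_margX p h0 _ x y)
  have ha2 : 0 < margX p A x := lt_of_lt_of_le ha4 (margXY_le_margX p h0 _ x y)
  have hb3 : 0 < margX p (T ∪ A) x := lt_of_lt_of_le hb1 (margXY_le_margX p h0 _ x y)
  rw [← mul_add]
  congr 1
  rw [← Real.log_mul (by positivity) (by positivity)]
  congr 1
  field_simp
end aux4

section aux5
variable {M : ℕ} {α : Fin M → Type*} [∀ i, Fintype (α i)]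
    [∀ i, DecidableEq (α i)] {β : Type*} [Fintype β]
    (p : (∀ i, α i) → β → ℝ)

lemma condMI_empty_le (h0 : ∀ x y, 0 ≤ p x y)
    (hp1 : ∑ x : ∀ i, α i, ∑ y : β, p x y = 1)
    (hind : ∀ x : ∀ i, α i, margX p Finset.univ x = ∏ i : Fin M, margX p {i} x)
    {B C : Finset (Fin M)} (hBC : Disjoint B C) :
    condMI p B ∅ ≤ condMI p B C := by
  -- nonemptiness
  have hne : Nonempty (∀ i, α i) := by
    by_contra h
    rw [not_nonempty_iff] at h
    rw [Finset.univ_eq_empty, Finset.sum_empty] at hp1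
    exact one_ne_zero hp1.symm
  obtain ⟨x0⟩ := hne
  set q : β → ℝ := fun y => ∑ x : ∀ i, α i, p x y with hq
  have hq0 : ∀ y, 0 ≤ q y := fun y => Finset.sum_nonneg fun x _ => h0 x y
  have hqle : ∀ x y, p x y ≤ q y := fun x y =>
    Finset.single_le_sum (fun x' _ => h0 x' y) (Finset.mem_univ x)
  -- Step A : the difference as a single sum
  have stepA : condMI p B C - condMI p B ∅
      = ∑ x : ∀ i, α i, ∑ y : β, p x y *
          Real.log (margXY p (B ∪ C) x y * q y / (margXY p B x y * margXY p C x y)) := by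
    unfold condMI
    rw [← Finset.sum_sub_distrib]
    refine Finset.sum_congr rfl fun x _ => ?_
    rw [← Finset.sum_sub_distrib]
    refine Finset.sum_congr rfl fun y _ => ?_
    rcases eq_or_lt_of_le (h0 x y) with hz | hpo
    · rw [← hz]; ring
    have hBe : B ∪ (∅ : Finset (Fin M)) = B := Finset.union_empty B
    rw [hBe, margX_empty p hp1, margXY_empty p]
    have hmBC : 0 < margXY p (B ∪ C) x y := lt_of_lt_of_le hpo (le_margXY p h0 _ x y)
    have hmB : 0 < margXY p B x y := lt_of_lt_of_le hpo (le_margXY p h0 _ x y)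
    have hmC : 0 < margXY p C x y := lt_of_lt_of_le hpo (le_margXY p h0 _ x y)
    have hxBC : 0 < margX p (B ∪ C) x := lt_of_lt_of_le hmBC (margXY_le_margX p h0 _ x y)
    have hxB : 0 < margX p B x := lt_of_lt_of_le hmB (margXY_le_margX p h0 _ x y)
    have hxC : 0 < margX p C x := lt_of_lt_of_le hmC (margXY_le_margX p h0 _ x y)
    have hqy : 0 < q y := lt_of_lt_of_le hpo (hqle x y)
    have hqq : (∑ x' : ∀ i, α i, p x' y) = q y := rfl
    rw [hqq, ← mul_sub]
    congr 1
    rw [← Real.log_div (by positivity) (by positivity)]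
    congr 1
    rw [margX_union p hp1 hind hBC]
    field_simp
  -- Step B : nonnegativity
  have stepB : 0 ≤ ∑ x : ∀ i, α i, ∑ y : β, p x y *
      Real.log (margXY p (B ∪ C) x y * q y / (margXY p B x y * margXY p C x y)) := by
    -- termwise lower bound
    have bound : ∀ x y, p x y - p x y *
        (margXY p B x y * margXY p C x y / (margXY p (B ∪ C) x y * q y))
        ≤ p x y * Real.log (margXY p (B ∪ C) x y * q y /
            (margXY p B x y * margXY p C x y)) := by
      intro x y
      rcases eq_or_lt_of_le (h0 x y) with hz | hpo
      · rw [← hz]; simp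
      have hmBC : 0 < margXY p (B ∪ C) x y := lt_of_lt_of_le hpo (le_margXY p h0 _ x y)
      have hmB : 0 < margXY p B x y := lt_of_lt_of_le hpo (le_margXY p h0 _ x y)
      have hmC : 0 < margXY p C x y := lt_of_lt_of_le hpo (le_margXY p h0 _ x y)
      have hqy : 0 < q y := lt_of_lt_of_le hpo (hqle x y)
      have ht : 0 < margXY p (B ∪ C) x y * q y / (margXY p B x y * margXY p C x y) := by
        positivity
      have hlog := Real.one_sub_inv_le_log_of_pos ht
      rw [inv_div] at hlog
      have := mul_le_mul_of_nonneg_left hlog (le_of_lt hpo)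
      calc p x y - p x y * (margXY p B x y * margXY p C x y /
              (margXY p (B ∪ C) x y * q y))
          = p x y * (1 - margXY p B x y * margXY p C x y /
              (margXY p (B ∪ C) x y * q y)) := by ring
        _ ≤ _ := this
    -- the expectation bound E ≤ 1
    have E_le : ∑ x : ∀ i, α i, ∑ y : β, p x y *
        (margXY p B x y * margXY p C x y / (margXY p (B ∪ C) x y * q y)) ≤ 1 := by
      rw [Finset.sum_comm]
      have perY : ∀ y : β, ∑ x : ∀ i, α i, p x y *
          (margXY p B x y * margXY p C x y / (margXY p (B ∪ C) x y * q y)) ≤ q y := by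
        intro y
        have hclass : ∀ x x' : ∀ i, α i, (∀ i ∈ B ∪ C, x i = x' i) →
            (margXY p B x y * margXY p C x y / (margXY p (B ∪ C) x y * q y))
            = (margXY p B x' y * margXY p C x' y / (margXY p (B ∪ C) x' y * q y)) := by
          intro x x' h
          rw [margXY_congr p (fun i hi => h i (Finset.mem_union_left C hi)) y,
            margXY_congr p (fun i hi => h i (Finset.mem_union_right B hi)) y,
            margXY_congr p (fun i hi => h i hi) y]
        rw [group_sum p (B ∪ C) x0 y _ hclass]
        have perU : ∀ u : ∀ i : {i : Fin M // i ∈ B ∪ C}, α i.1,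
            margXY p (B ∪ C) (emb (B ∪ C) x0 u) y *
              (margXY p B (emb (B ∪ C) x0 u) y * margXY p C (emb (B ∪ C) x0 u) y /
                (margXY p (B ∪ C) (emb (B ∪ C) x0 u) y * q y))
            ≤ margXY p B (emb (B ∪ C) x0 u) y * margXY p C (emb (B ∪ C) x0 u) y / q y := by
          intro u
          set a := margXY p (B ∪ C) (emb (B ∪ C) x0 u) y with ha
          set b := margXY p B (emb (B ∪ C) x0 u) y with hb
          set c := margXY p C (emb (B ∪ C) x0 u) y with hc
          have hb0 : 0 ≤ b := margXY_nonneg p h0 _ _ y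
          have hc0 : 0 ≤ c := margXY_nonneg p h0 _ _ y
          rcases eq_or_lt_of_le (margXY_nonneg p h0 (B ∪ C) (emb (B ∪ C) x0 u) y) with hz | hpa
          · have ha0 : a = 0 := by rw [ha, ← hz]
            rw [ha0, zero_mul]
            exact div_nonneg (mul_nonneg hb0 hc0) (hq0 y)
          have ha' : a ≠ 0 := by rw [ha]; exact ne_of_gt hpa
          rcases eq_or_lt_of_le (hq0 y) with hqz | hqp
          · rw [← hqz]; simp
          have hq' : q y ≠ 0 := ne_of_gt hqp
          have heq : a * (b * c / (a * q y)) = b * c / q y := by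
            field_simp
          rw [heq]
        calc ∑ u : ∀ i : {i : Fin M // i ∈ B ∪ C}, α i.1,
              margXY p (B ∪ C) (emb (B ∪ C) x0 u) y *
                (margXY p B (emb (B ∪ C) x0 u) y * margXY p C (emb (B ∪ C) x0 u) y /
                  (margXY p (B ∪ C) (emb (B ∪ C) x0 u) y * q y))
            ≤ ∑ u : ∀ i : {i : Fin M // i ∈ B ∪ C}, α i.1,
              margXY p B (emb (B ∪ C) x0 u) y * margXY p C (emb (B ∪ C) x0 u) y / q y :=
              Finset.sum_le_sum fun u _ => perU u
          _ = (∑ u : ∀ i : {i : Fin M // i ∈ B ∪ C}, α i.1,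
              margXY p B (emb (B ∪ C) x0 u) y * margXY p C (emb (B ∪ C) x0 u) y) / q y := by
              rw [Finset.sum_div]
          _ = q y * q y / q y := by rw [count_sum p hBC x0 y]
          _ ≤ q y := by
              rcases eq_or_lt_of_le (hq0 y) with hqz | hqp
              · rw [← hqz]; simp
              · rw [mul_div_assoc, div_self (ne_of_gt hqp), mul_one]
      calc ∑ y : β, ∑ x : ∀ i, α i, p x y *
            (margXY p B x y * margXY p C x y / (margXY p (B ∪ C) x y * q y))
          ≤ ∑ y : β, q y := Finset.sum_le_sum fun y _ => perY y
        _ = 1 := by rw [hq]; rw [Finset.sum_comm]; exact hp1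
    have total : ∑ x : ∀ i, α i, ∑ y : β, (p x y - p x y *
        (margXY p B x y * margXY p C x y / (margXY p (B ∪ C) x y * q y)))
        = 1 - ∑ x : ∀ i, α i, ∑ y : β, p x y *
            (margXY p B x y * margXY p C x y / (margXY p (B ∪ C) x y * q y)) := by
      rw [← hp1, ← Finset.sum_sub_distrib]
      refine Finset.sum_congr rfl fun x _ => ?_
      rw [← Finset.sum_sub_distrib]
    calc (0:ℝ) ≤ 1 - ∑ x : ∀ i, α i, ∑ y : β, p x y *
            (margXY p B x y * margXY p C x y / (margXY p (B ∪ C) x y * q y)) := by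
          linarith [E_le]
      _ = ∑ x : ∀ i, α i, ∑ y : β, (p x y - p x y *
            (margXY p B x y * margXY p C x y / (margXY p (B ∪ C) x y * q y))) := total.symm
      _ ≤ _ := Finset.sum_le_sum fun x _ => Finset.sum_le_sum fun y _ => bound x y
  linarith [stepA, stepB]

end aux5


/-- `p` is a probability mass function. -/
def IsProb {M : ℕ} {α : Fin M → Type*} [∀ i, Fintype (α i)]
    [∀ i, DecidableEq (α i)] {β : Type*} [Fintype β]
    (p : (∀ i, α i) → β → ℝ) : Prop :=
  (∀ x y, 0 ≤ p x y) ∧ ∑ x : ∀ i, α i, ∑ y : β, p x y = 1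

/-- The inputs `X_1, …, X_M` are mutually independent. -/
def IndepInputs {M : ℕ} {α : Fin M → Type*} [∀ i, Fintype (α i)]
    [∀ i, DecidableEq (α i)] {β : Type*} [Fintype β]
    (p : (∀ i, α i) → β → ℝ) : Prop :=
  ∀ x : ∀ i, α i, margX p Finset.univ x = ∏ i : Fin M, margX p {i} x

/-- Membership in the fundamental region `R`. -/
def memR {M : ℕ} {α : Fin M → Type*} [∀ i, Fintype (α i)]
    [∀ i, DecidableEq (α i)] {β : Type*} [Fintype β]
    (p : (∀ i, α i) → β → ℝ) (r : Fin M → ℝ) : Prop :=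
  (∀ i, 0 ≤ r i) ∧ ∀ S : Finset (Fin M), ∑ i ∈ S, r i ≤ condMI p S Sᶜ

/-- Membership in the front facet `F_S`. -/
def memF {M : ℕ} {α : Fin M → Type*} [∀ i, Fintype (α i)]
    [∀ i, DecidableEq (α i)] {β : Type*} [Fintype β]
    (p : (∀ i, α i) → β → ℝ) (S : Finset (Fin M)) (r : Fin M → ℝ) : Prop :=
  memR p r ∧ ∑ i ∈ S, r i = condMI p S Sᶜ

/-- Membership in the back face `B_A`. -/
def memB {M : ℕ} {α : Fin M → Type*} [∀ i, Fintype (α i)]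
    [∀ i, DecidableEq (α i)] {β : Type*} [Fintype β]
    (p : (∀ i, α i) → β → ℝ) (A : Finset (Fin M)) (r : Fin M → ℝ) : Prop :=
  memR p r ∧ ∀ i ∈ A, r i = 0

/-- Under non-degeneracy condition (1), strict monotonicity in the first
argument: `I(X_S; Y | X_A) < I(X_T; Y | X_A)` for `S ⊊ T`, `A ∩ T = ∅`. -/
theorem stmt8 {M : ℕ} {α : Fin M → Type*} [∀ i, Fintype (α i)]
    [∀ i, DecidableEq (α i)] {β : Type*} [Fintype β]
    (p : (∀ i, α i) → β → ℝ) (hp : IsProb p) (hind : IndepInputs p)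
    (hpos : ∀ S : Finset (Fin M), S.Nonempty → 0 < condMI p S ∅)
    (S T A : Finset (Fin M)) (hS : S.Nonempty) (hST : S ⊂ T)
    (hAS : Disjoint A S) (hAT : Disjoint A T) :
    condMI p S A < condMI p T A := by
  obtain ⟨hp0, hp1⟩ := hp
  have hchain := condMI_chain p hp0 (A := A) hST.subset
  have hTS : (T \ S).Nonempty :=
    Finset.sdiff_nonempty.mpr (fun h => hST.ne (Finset.Subset.antisymm hST.subset h))
  have hd1 : Disjoint (T \ S) (S ∪ A) := by
    rw [Finset.disjoint_union_right]
    exact ⟨Finset.sdiff_disjoint, Disjoint.mono_left Finset.sdiff_subset hAT.symm⟩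
  have h1 : 0 < condMI p (T \ S) ∅ := hpos _ hTS
  have h2 : condMI p (T \ S) ∅ ≤ condMI p (T \ S) (S ∪ A) :=
    condMI_empty_le p hp0 hp1 hind hd1
  linarith
end

section
/- For every M ≥ 1, the total count ∑_{i=0}^{M} C(M,i)·(number of strictly decreasing chains of i nonempty subsets of an i-set, i.e., maximal chains) equals ∑_{i=0}^{M} C(M,i)·i! = ⌊e·M!⌋; i.e., the total number of vertices of the M-user capacity polytope is ⌊e·M!⌋. -/
lemma sm_le {n : ℕ} (f : Fin n → ℕ) (hf : StrictMono f) :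
    ∀ (d : ℕ) (j k : Fin n), (k : ℕ) = (j : ℕ) + d → f j + d ≤ f k := by
  intro d
  induction d with
  | zero =>
    intro j k h
    have : j = k := Fin.ext (by omega)
    simp [this]
  | succ d ih =>
    intro j k h
    have hk' : (j : ℕ) + d < n := by omega
    have h1 := ih j ⟨(j : ℕ) + d, hk'⟩ rfl
    have h2 : f ⟨(j : ℕ) + d, hk'⟩ < f k := hf (by simp [Fin.lt_def]; omega)
    omega

lemma chainAux {n : ℕ} (c : Fin (n + 1) → Finset (Fin (n + 1)))
    (h1 : ∀ j, (c j).Nonempty) (h2 : ∀ j k, j < k → c k ⊂ c j) :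
    ∃ m : Fin (n + 1) → Fin (n + 1), Function.Injective m ∧
      ∀ j x, x ∈ c j ↔ j ≤ m x := by
  have hmono : ∀ j k : Fin (n + 1), j ≤ k → c k ⊆ c j := by
    intro j k h
    rcases eq_or_lt_of_le h with rfl | h
    · exact subset_rfl
    · exact (h2 j k h).subset
  set g : Fin (n + 1) → ℕ := fun j => (c j.rev).card with hg
  have hgsm : StrictMono g := by
    intro j k hjk
    exact Finset.card_lt_card (h2 _ _ (by rwa [Fin.rev_lt_rev]))
  have hcard : ∀ j : Fin (n + 1), (c j).card = n + 1 - (j : ℕ) := by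
    intro j
    have e1 : g j.rev = (c j).card := by simp [hg, Fin.rev_rev]
    have hjr : (j.rev : ℕ) = n - (j : ℕ) := by
      simp [Fin.val_rev]
    have lb : (j.rev : ℕ) + 1 ≤ g j.rev := by
      have h := sm_le g hgsm (j.rev : ℕ) 0 j.rev (by simp)
      have hg0 : 1 ≤ g 0 := Finset.card_pos.mpr (h1 _)
      omega
    have ub : g j.rev + (n - (j.rev : ℕ)) ≤ n + 1 := by
      have h := sm_le g hgsm (n - (j.rev : ℕ)) j.rev (Fin.last n)
        (by have := j.rev.isLt; simp only [Fin.val_last]; omega)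
      have h' : g (Fin.last n) ≤ n + 1 := by
        have := Finset.card_le_univ (c (Fin.last n).rev)
        simpa [hg] using this
      omega
    omega
  have huniv : c 0 = Finset.univ := by
    apply Finset.eq_univ_of_card
    rw [hcard]
    simp
  have hne : ∀ x : Fin (n + 1), (Finset.univ.filter (fun j => x ∈ c j)).Nonempty :=
    fun x => ⟨0, by simp [huniv]⟩
  set m : Fin (n + 1) → Fin (n + 1) :=
    fun x => (Finset.univ.filter (fun j => x ∈ c j)).max' (hne x) with hm
  have hiff : ∀ j x, x ∈ c j ↔ j ≤ m x := by
    intro j x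
    constructor
    · intro hx
      exact Finset.le_max' _ j (by simp [hx])
    · intro hj
      have hmem : x ∈ c (m x) := by
        have := Finset.max'_mem _ (hne x)
        simpa using this
      exact hmono j (m x) hj hmem
  refine ⟨m, ?_, hiff⟩
  intro x y hxy
  by_contra hne'
  have hxj : x ∈ c (m x) := (hiff (m x) x).mpr le_rfl
  have hyj : y ∈ c (m x) := (hiff (m x) y).mpr (by rw [hxy])
  by_cases hj : ((m x : Fin (n + 1)) : ℕ) = n
  · have hc1 : (c (m x)).card = 1 := by rw [hcard]; omega
    exact hne' (Finset.card_le_one.mp hc1.le x hxj y hyj)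
  · have hjn : ((m x : Fin (n + 1)) : ℕ) + 1 < n + 1 := by
      have := (m x).isLt; omega
    set k : Fin (n + 1) := ⟨((m x : Fin (n + 1)) : ℕ) + 1, hjn⟩ with hk
    have hjk : m x < k := by simp [Fin.lt_def, hk]
    have hxk : x ∉ c k := fun hxk => hjk.not_ge ((hiff k x).mp hxk)
    have hyk : y ∉ c k := fun hyk => by
      have := (hiff k y).mp hyk
      rw [← hxy] at this
      exact hjk.not_ge this
    have hsub := (h2 _ k hjk).subset
    have hcards : (c (m x) \ c k).card = 1 := by
      rw [Finset.card_sdiff_of_subset hsub, hcard, hcard]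
      simp only [hk]
      have := (m x).isLt
      omega
    exact hne' (Finset.card_le_one.mp hcards.le x
      (Finset.mem_sdiff.mpr ⟨hxj, hxk⟩) y (Finset.mem_sdiff.mpr ⟨hyj, hyk⟩))

lemma chains_card (i : ℕ) :
    Nat.card {c : Fin i → Finset (Fin i) //
      (∀ j, (c j).Nonempty) ∧ (∀ j k, j < k → c k ⊂ c j)} = i.factorial := by
  match i with
  | 0 =>
    show Nat.card _ = 1
    rw [Nat.card_eq_one_iff_unique]
    refine ⟨⟨fun a b => ?_⟩, ⟨⟨fun j => j.elim0, fun j => j.elim0, fun j => j.elim0⟩⟩⟩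
    apply Subtype.ext; funext j; exact j.elim0
  | (n + 1) =>
    apply le_antisymm
    · have key : ∀ s : {c : Fin (n + 1) → Finset (Fin (n + 1)) //
          (∀ j, (c j).Nonempty) ∧ (∀ j k, j < k → c k ⊂ c j)},
          ∃ m : Fin (n + 1) ↪ Fin (n + 1), ∀ j x, x ∈ s.1 j ↔ j ≤ m x := by
        intro s
        obtain ⟨m, hinj, hiff⟩ := chainAux s.1 s.2.1 s.2.2
        exact ⟨⟨m, hinj⟩, hiff⟩
      choose F hF using key
      have hFinj : Function.Injective F := by
        intro s t hst
        apply Subtype.ext; funext j; ext x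
        rw [hF s j x, hF t j x, hst]
      have h := Nat.card_le_card_of_injective F hFinj
      rwa [Nat.card_eq_fintype_card (α := Fin (n + 1) ↪ Fin (n + 1)),
        Fintype.card_embedding_eq, Fintype.card_fin, Nat.descFactorial_self] at h
    · set G : Equiv.Perm (Fin (n + 1)) → {c : Fin (n + 1) → Finset (Fin (n + 1)) //
          (∀ j, (c j).Nonempty) ∧ (∀ j k, j < k → c k ⊂ c j)} := fun σ =>
        ⟨fun j => Finset.univ.filter (fun x => j ≤ σ.symm x),
          ⟨fun j => ⟨σ j, by simp⟩, by
            intro j k hjk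
            rw [Finset.ssubset_def]
            constructor
            · intro x hx
              simp only [Finset.mem_filter, Finset.mem_univ, true_and] at hx ⊢
              exact hjk.le.trans hx
            · intro hsub
              have h := hsub (show σ j ∈ _ by simp)
              simp only [Finset.mem_filter, Finset.mem_univ, true_and,
                Equiv.symm_apply_apply] at h
              exact hjk.not_ge h⟩⟩ with hG
      have hGinj : Function.Injective G := by
        intro σ τ h
        have h' : ∀ j x : Fin (n + 1), j ≤ σ.symm x ↔ j ≤ τ.symm x := by
          intro j x
          have := congrArg (fun s => x ∈ s.1 j) h
          simpa [hG] using this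
        have hsymm : σ.symm = τ.symm := Equiv.ext (fun x =>
          le_antisymm ((h' (σ.symm x) x).mp le_rfl) ((h' (τ.symm x) x).mpr le_rfl))
        have := congrArg Equiv.symm hsymm
        simpa using this
      have h := Nat.card_le_card_of_injective G hGinj
      rwa [Nat.card_eq_fintype_card (α := Equiv.Perm (Fin (n + 1))), Fintype.card_perm,
        Fintype.card_fin] at h

lemma floor_part (M : ℕ) (hM : 1 ≤ M) :
    ((∑ i ∈ Finset.range (M + 1), M.choose i * i.factorial : ℤ)) =
      ⌊Real.exp 1 * (M.factorial : ℝ)⌋ := by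
  have hfac : ∀ k : ℕ, (0 : ℝ) < (k.factorial : ℝ) := fun k => by
    exact_mod_cast k.factorial_pos
  have hsum : ((∑ i ∈ Finset.range (M + 1), M.choose i * i.factorial : ℤ) : ℝ) =
      (M.factorial : ℝ) * ∑ k ∈ Finset.range (M + 1), (1 : ℝ) / k.factorial := by
    push_cast
    rw [Finset.mul_sum, ← Finset.sum_range_reflect]
    apply Finset.sum_congr rfl
    intro j hj
    simp only [Finset.mem_range] at hj
    have hj' : j ≤ M := by omega
    have h1 : M + 1 - 1 - j = M - j := by omega
    rw [h1]
    have h2 : M - j ≤ M := by omega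
    rw [Nat.cast_choose ℝ h2]
    have h3 : M - (M - j) = j := by omega
    rw [h3]
    have := hfac (M - j)
    have := hfac j
    field_simp
  set T : ℝ := ∑ k ∈ Finset.range (M + 1), (1 : ℝ) / k.factorial with hT
  have hTle : T ≤ Real.exp 1 := by
    have := Real.sum_le_exp_of_nonneg zero_le_one (M + 1)
    simpa [hT] using this
  have hupper : Real.exp 1 ≤ T + (M + 1 + 1) / ((M + 1).factorial * (M + 1)) := by
    have h := Real.exp_bound' (zero_le_one) le_rfl (n := M + 1) (Nat.succ_pos M)
    simpa [hT] using h
  symm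
  rw [Int.floor_eq_iff]
  constructor
  · rw [hsum]
    rw [mul_comm]
    exact mul_le_mul_of_nonneg_right hTle (le_of_lt (hfac M))
  · rw [hsum]
    have hstep : Real.exp 1 * (M.factorial : ℝ) ≤
        T * M.factorial + (M + 1 + 1) / ((M + 1) * (M + 1)) := by
      have h := mul_le_mul_of_nonneg_right hupper (le_of_lt (hfac M))
      have heq : ((M : ℝ) + 1 + 1) / (((M + 1).factorial : ℝ) * ((M : ℝ) + 1)) * (M.factorial : ℝ) =
          ((M : ℝ) + 1 + 1) / (((M : ℝ) + 1) * ((M : ℝ) + 1)) := by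
        rw [Nat.factorial_succ]
        push_cast
        have hM1 : (0 : ℝ) < (M : ℝ) + 1 := by positivity
        have := hfac M
        field_simp
      calc Real.exp 1 * (M.factorial : ℝ)
          ≤ (T + (M + 1 + 1) / ((M + 1).factorial * (M + 1))) * M.factorial := h
        _ = T * M.factorial + (M + 1 + 1) / ((M + 1).factorial * (M + 1)) * M.factorial := by ring
        _ = T * M.factorial + (M + 1 + 1) / ((M + 1) * (M + 1)) := by rw [heq]
    have hfrac : ((M : ℝ) + 1 + 1) / ((M + 1) * (M + 1)) < 1 := by
      rw [div_lt_one (by positivity)]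
      have hM' : (1 : ℝ) ≤ (M : ℝ) := by exact_mod_cast hM
      nlinarith
    have : (M.factorial : ℝ) * T = T * M.factorial := mul_comm _ _
    calc Real.exp 1 * (M.factorial : ℝ)
        ≤ T * M.factorial + (M + 1 + 1) / ((M + 1) * (M + 1)) := hstep
      _ < T * M.factorial + 1 := by linarith
      _ = (M.factorial : ℝ) * T + 1 := by ring

/-- For `M ≥ 1`, the total number of vertices of the `M`-user capacity
polytope is `∑_{i=0}^{M} C(M,i)·(#maximal chains on an i-set)
= ∑_{i=0}^{M} C(M,i)·i! = ⌊e·M!⌋`. -/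
theorem stmt19 (M : ℕ) (hM : 1 ≤ M) :
    (∑ i ∈ Finset.range (M + 1),
        M.choose i * Nat.card {c : Fin i → Finset (Fin i) //
          (∀ j, (c j).Nonempty) ∧ (∀ j k, j < k → c k ⊂ c j)} =
      ∑ i ∈ Finset.range (M + 1), M.choose i * i.factorial) ∧
    ((∑ i ∈ Finset.range (M + 1), M.choose i * i.factorial : ℤ) =
      ⌊Real.exp 1 * (M.factorial : ℝ)⌋) := by
  constructor
  · apply Finset.sum_congr rfl
    intro i _
    rw [chains_card]
  · exact floor_part M hM
end
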